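/- The probability measure with density 1/(log 2 · (1+x)) on [0,1] is invariant under the Gauss map G. -/

import Mathlib

open MeasureTheory

noncomputable section

/-- The Gauss map. -/
def G (x : ℝ) : ℝ := if x = 0 then 0 else 1 / x - ⌊1 / x⌋

/-- The Gauss measure, with density `1/(log 2 · (1+x))` on `[0,1]`. -/
def gaussMeasure : Measure ℝ :=
  (volume.restrict (Set.Icc (0 : ℝ) 1)).withDensity fun x =>
    ENNReal.ofReal (1 / (Real.log 2 * (1 + x)))

open Set

lemma measurable_G : Measurable G := by
  unfold G
  refine Measurable.ite (measurableSet_eq) measurable_const ?_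
  have : Measurable fun x : ℝ => (1:ℝ)/x := by
    simpa [one_div] using (measurable_inv : Measurable fun x : ℝ => x⁻¹)
  exact this.sub ((measurable_of_countable (Int.cast : ℤ → ℝ)).comp (Measurable.floor this))

lemma G_nonneg (x : ℝ) : 0 ≤ G x := by
  unfold G
  split
  · exact le_refl 0
  · exact Int.fract_nonneg (1/x)

lemma G_lt_one (x : ℝ) : G x < 1 := by
  unfold G
  split
  · norm_num
  · exact Int.fract_lt_one (1/x)

lemma nu_apply {s : Set ℝ} (hs : MeasurableSet s) :
    gaussMeasure s = ∫⁻ x in s ∩ Icc 0 1, ENNReal.ofReal (1 / (Real.log 2 * (1 + x))) := by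
  rw [gaussMeasure, withDensity_apply _ hs, Measure.restrict_restrict hs]

lemma f_contOn {c d : ℝ} (hc : 0 ≤ c) :
    ContinuousOn (fun x : ℝ => 1 / (Real.log 2 * (1 + x))) (Icc c d) := by
  apply ContinuousOn.div continuousOn_const
  · exact (continuous_const.mul (continuous_const.add continuous_id)).continuousOn
  · intro x hx
    have h1 : (0:ℝ) < 1 + x := by nlinarith [hx.1]
    have h2 : (0:ℝ) < Real.log 2 := Real.log_pos (by norm_num)
    positivity

lemma nu_Icc {c d : ℝ} (hc : 0 ≤ c) (hcd : c ≤ d) (hd : d ≤ 1) :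
    gaussMeasure (Icc c d)
      = ENNReal.ofReal ((Real.log (1 + d) - Real.log (1 + c)) / Real.log 2) := by
  have hsub : Icc c d ⊆ Icc (0:ℝ) 1 := Icc_subset_Icc hc hd
  rw [nu_apply measurableSet_Icc, inter_eq_left.2 hsub]
  have hint : IntegrableOn (fun x : ℝ => 1 / (Real.log 2 * (1 + x))) (Icc c d) :=
    (f_contOn hc).integrableOn_Icc
  have hnn : 0 ≤ᵐ[volume.restrict (Icc c d)] fun x : ℝ => 1 / (Real.log 2 * (1 + x)) := by
    filter_upwards [ae_restrict_mem measurableSet_Icc] with x hx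
    have h1 : (0:ℝ) < 1 + x := by nlinarith [hx.1, hc]
    have h2 : (0:ℝ) < Real.log 2 := Real.log_pos (by norm_num)
    positivity
  rw [← ofReal_integral_eq_lintegral_ofReal hint hnn]
  congr 1
  rw [integral_Icc_eq_integral_Ioc, ← intervalIntegral.integral_of_le hcd]
  have h2 : (0:ℝ) < Real.log 2 := Real.log_pos (by norm_num)
  have : ∀ x : ℝ, 1 / (Real.log 2 * (1 + x)) = (Real.log 2)⁻¹ * (1 / (x + 1)) := by
    intro x; field_simp; ring
  simp_rw [this]
  rw [intervalIntegral.integral_const_mul]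
  have hshift : (∫ x in c..d, 1 / (x + 1)) = ∫ x in (c+1)..(d+1), 1 / x := by
    simpa using intervalIntegral.integral_comp_add_right (a := c) (b := d)
      (fun x => 1 / x) 1
  rw [hshift, integral_one_div (by
      intro h
      rcases (Set.mem_uIcc.1 h) with ⟨h1, _⟩ | ⟨_, h2⟩ <;> linarith)]
  rw [Real.log_div (by linarith) (by linarith)]
  rw [div_eq_inv_mul]
  ring_nf

lemma nu_total : gaussMeasure (Icc (0:ℝ) 1) = 1 := by
  rw [nu_Icc le_rfl zero_le_one le_rfl]
  norm_num

lemma nu_univ : gaussMeasure Set.univ = 1 := by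
  have h : gaussMeasure (Icc (0:ℝ) 1)
      = ∫⁻ x in Icc (0:ℝ) 1, ENNReal.ofReal (1 / (Real.log 2 * (1 + x))) := by
    rw [nu_apply measurableSet_Icc, inter_self]
  rw [nu_apply MeasurableSet.univ, univ_inter, ← h, nu_total]

lemma nu_null_singleton : gaussMeasure {(0:ℝ)} = 0 := by
  rw [nu_apply (measurableSet_singleton 0)]
  refine le_antisymm ?_ zero_le
  calc ∫⁻ x in ({0} ∩ Icc 0 1 : Set ℝ), ENNReal.ofReal (1 / (Real.log 2 * (1 + x)))
      ≤ ∫⁻ _ in ({0} ∩ Icc 0 1 : Set ℝ), ⊤ := lintegral_mono fun _ => le_top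
    _ = 0 := by
        rw [setLIntegral_const]
        have : volume ({(0:ℝ)} ∩ Icc 0 1) = 0 :=
          measure_mono_null inter_subset_left (Real.volume_singleton)
        simp [this]

lemma nu_eq_inter {s : Set ℝ} (hs : MeasurableSet s) :
    gaussMeasure s = gaussMeasure (s ∩ Ioc 0 1) := by
  apply le_antisymm
  · have h1 : gaussMeasure s = gaussMeasure (s ∩ Icc 0 1) := by
      rw [nu_apply hs, nu_apply (hs.inter measurableSet_Icc), inter_assoc, inter_self]
    rw [h1]
    have hsub : s ∩ Icc 0 1 ⊆ (s ∩ Ioc 0 1) ∪ {0} := by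
      rintro x ⟨hxs, hx0, hx1⟩
      rcases eq_or_lt_of_le hx0 with h | h
      · exact Or.inr (by simp [← h])
      · exact Or.inl ⟨hxs, h, hx1⟩
    calc gaussMeasure (s ∩ Icc 0 1) ≤ gaussMeasure ((s ∩ Ioc 0 1) ∪ {0}) :=
          measure_mono hsub
      _ ≤ gaussMeasure (s ∩ Ioc 0 1) + gaussMeasure {0} := measure_union_le _ _
      _ = gaussMeasure (s ∩ Ioc 0 1) := by rw [nu_null_singleton, add_zero]
  · exact measure_mono inter_subset_left

lemma nu_Iic {a : ℝ} (h0 : 0 ≤ a) (h1 : a ≤ 1) :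
    gaussMeasure (Iic a) = ENNReal.ofReal (Real.log (1 + a) / Real.log 2) := by
  have hset : Iic a ∩ Icc 0 1 = Icc 0 a ∩ Icc (0:ℝ) 1 := by
    ext x
    simp only [mem_inter_iff, mem_Iic, mem_Icc]
    constructor
    · rintro ⟨hx, hx0, hx1⟩; exact ⟨⟨hx0, hx⟩, hx0, hx1⟩
    · rintro ⟨⟨hx0, hx⟩, _⟩; exact ⟨hx, hx0, le_trans hx h1⟩
  have h : gaussMeasure (Iic a) = gaussMeasure (Icc 0 a) := by
    rw [nu_apply measurableSet_Iic, nu_apply measurableSet_Icc, hset]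
  rw [h, nu_Icc le_rfl h0 h1]
  norm_num

/-- The intervals making up `G⁻¹(Iic a) ∩ (0,1]`. -/
def I (a : ℝ) (n : ℕ) : Set ℝ := Icc (1 / ((n:ℝ) + 1 + a)) (1 / ((n:ℝ) + 1))

lemma preimage_eq {a : ℝ} (h0 : 0 ≤ a) (h1 : a < 1) :
    G ⁻¹' Iic a ∩ Ioc 0 1 = ⋃ n : ℕ, I a n := by
  ext x
  simp only [mem_inter_iff, mem_preimage, mem_Iic, mem_Ioc, mem_iUnion, I, mem_Icc]
  constructor
  · rintro ⟨hGa, hx0, hx1⟩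
    have hxne : x ≠ 0 := ne_of_gt hx0
    have hy1 : (1:ℝ) ≤ 1 / x := by rw [le_div_iff₀ hx0]; linarith
    have hfl : (1:ℤ) ≤ ⌊1/x⌋ := Int.le_floor.2 (by exact_mod_cast hy1)
    refine ⟨(⌊1/x⌋ - 1).toNat, ?_⟩
    have hcast : ((⌊1/x⌋ - 1).toNat : ℝ) + 1 = (⌊1/x⌋ : ℝ) := by
      exact_mod_cast (by omega : ((⌊1/x⌋ - 1).toNat : ℤ) + 1 = ⌊1/x⌋)
    rw [hcast]
    have hG : 1/x - (⌊1/x⌋:ℝ) ≤ a := by simpa [G, hxne] using hGa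
    have hm1 : (1:ℝ) ≤ (⌊1/x⌋:ℝ) := by exact_mod_cast hfl
    have hfle : (⌊1/x⌋:ℝ) ≤ 1/x := Int.floor_le _
    have hxy : x * (1/x) = 1 := by field_simp
    constructor
    · rw [div_le_iff₀ (by linarith)]
      nlinarith [mul_le_mul_of_nonneg_left (show 1/x ≤ (⌊1/x⌋:ℝ) + a by linarith) hx0.le]
    · rw [le_div_iff₀ (by linarith)]
      nlinarith [mul_le_mul_of_nonneg_left hfle hx0.le]
  · rintro ⟨n, hlo, hhi⟩
    have hna : (0:ℝ) < (n:ℝ) + 1 + a := by positivity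
    have hn1 : (0:ℝ) < (n:ℝ) + 1 := by positivity
    have hx0 : 0 < x := lt_of_lt_of_le (by positivity) hlo
    have hxne : x ≠ 0 := ne_of_gt hx0
    have hx1 : x ≤ 1 := le_trans hhi (by rw [div_le_one hn1]; linarith)
    have hylo : (n:ℝ) + 1 ≤ 1/x := by
      rw [le_div_iff₀ hx0]
      calc ((n:ℝ)+1) * x ≤ ((n:ℝ)+1) * (1/((n:ℝ)+1)) :=
            mul_le_mul_of_nonneg_left hhi hn1.le
        _ = 1 := by field_simp
    have hyhi : 1/x ≤ (n:ℝ) + 1 + a := by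
      rw [div_le_iff₀ hx0]
      calc (1:ℝ) = ((n:ℝ)+1+a) * (1/((n:ℝ)+1+a)) := by field_simp
        _ ≤ ((n:ℝ)+1+a) * x := mul_le_mul_of_nonneg_left hlo hna.le
      -- note: goal was 1 ≤ (n+1+a) * x
    have hfloor : ⌊1/x⌋ = (n:ℤ) + 1 := by
      rw [Int.floor_eq_iff]
      constructor
      · push_cast; linarith
      · push_cast; linarith
    refine ⟨?_, hx0, hx1⟩
    simp only [G, hxne, if_false, hfloor]
    push_cast
    linarith

lemma I_subset {a : ℝ} (h0 : 0 ≤ a) (n : ℕ) : I a n ⊆ Icc (0:ℝ) 1 := by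
  intro x hx
  have hna : (0:ℝ) < (n:ℝ) + 1 + a := by positivity
  have hn1 : (0:ℝ) < (n:ℝ) + 1 := by positivity
  refine ⟨le_trans (by positivity) hx.1, le_trans hx.2 ?_⟩
  rw [div_le_one hn1]; linarith

lemma I_disjoint {a : ℝ} (h0 : 0 ≤ a) (h1 : a < 1) : Pairwise (Function.onFun Disjoint (I a)) := by
  have key : ∀ m n : ℕ, m < n → Disjoint (I a m) (I a n) := by
    intro m n hmn
    rw [Set.disjoint_left]
    rintro x ⟨hxm, _⟩ ⟨_, hxn⟩
    have h1m : (0:ℝ) < (m:ℝ) + 1 + a := by positivity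
    have h1n : (0:ℝ) < (n:ℝ) + 1 := by positivity
    have hmn' : (m:ℝ) + 1 + a < (n:ℝ) + 1 := by
      have : (m:ℝ) + 1 ≤ (n:ℝ) := by exact_mod_cast hmn
      linarith
    have : 1 / ((n:ℝ)+1) < 1 / ((m:ℝ)+1+a) := one_div_lt_one_div_of_lt h1m hmn'
    -- x ≥ 1/(m+1+a) > 1/(n+1) ≥ x, contradiction
    linarith
  intro m n hmn
  rcases lt_or_gt_of_ne hmn with h | h
  · exact key m n h
  · exact (key n m h).symm

lemma nu_I {a : ℝ} (h0 : 0 ≤ a) (n : ℕ) :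
    gaussMeasure (I a n)
      = ENNReal.ofReal ((Real.log (1 + 1/((n:ℝ)+1)) - Real.log (1 + 1/((n:ℝ)+1+a)))
          / Real.log 2) := by
  have hna : (0:ℝ) < (n:ℝ) + 1 + a := by positivity
  have hn1 : (0:ℝ) < (n:ℝ) + 1 := by positivity
  exact nu_Icc (by positivity)
    (one_div_le_one_div_of_le hn1 (by linarith)) (by rw [div_le_one hn1]; linarith)

lemma telescope {a : ℝ} (h0 : 0 ≤ a) :
    HasSum (fun n : ℕ => (Real.log (1 + 1/((n:ℝ)+1)) - Real.log (1 + 1/((n:ℝ)+1+a)))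
        / Real.log 2)
      (Real.log (1 + a) / Real.log 2) := by
  set g : ℕ → ℝ := fun n => Real.log (((n:ℝ)+1+a)/((n:ℝ)+1)) with hg
  have hlog2 : (0:ℝ) < Real.log 2 := Real.log_pos (by norm_num)
  have hterm : ∀ n : ℕ, (Real.log (1 + 1/((n:ℝ)+1)) - Real.log (1 + 1/((n:ℝ)+1+a)))
      / Real.log 2 = (g n - g (n+1)) / Real.log 2 := by
    intro n
    have hn1 : (0:ℝ) < (n:ℝ) + 1 := by positivity
    have hna : (0:ℝ) < (n:ℝ) + 1 + a := by positivity
    have e1 : 1 + 1/((n:ℝ)+1) = ((n:ℝ)+2)/((n:ℝ)+1) := by field_simp; ring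
    have e2 : 1 + 1/((n:ℝ)+1+a) = ((n:ℝ)+2+a)/((n:ℝ)+1+a) := by field_simp; ring
    have e3 : ((n:ℕ)+1 : ℕ) = n+1 := rfl
    congr 1
    simp only [hg]
    rw [e1, e2]
    push_cast
    rw [Real.log_div (by positivity) (by positivity),
        Real.log_div (by positivity) (by positivity),
        Real.log_div (by positivity) (by positivity),
        Real.log_div (by positivity) (by positivity)]
    ring
  simp_rw [hterm]
  have hnonneg : ∀ n : ℕ, 0 ≤ (g n - g (n+1)) / Real.log 2 := by
    intro n
    rw [← hterm n]
    have hn1 : (0:ℝ) < (n:ℝ) + 1 := by positivity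
    have hna : (0:ℝ) < (n:ℝ) + 1 + a := by positivity
    have : 1/((n:ℝ)+1+a) ≤ 1/((n:ℝ)+1) := one_div_le_one_div_of_le hn1 (by linarith)
    have hmono : Real.log (1 + 1/((n:ℝ)+1+a)) ≤ Real.log (1 + 1/((n:ℝ)+1)) :=
      Real.log_le_log (by positivity) (by linarith)
    apply div_nonneg (by linarith) hlog2.le
  rw [hasSum_iff_tendsto_nat_of_nonneg hnonneg]
  have hpartial : ∀ N : ℕ, ∑ i ∈ Finset.range N, (g i - g (i+1)) / Real.log 2
      = (g 0 - g N) / Real.log 2 := by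
    intro N
    rw [← Finset.sum_div, Finset.sum_range_sub' g N]
  simp_rw [hpartial]
  have hg0 : g 0 = Real.log (1 + a) := by
    simp only [hg]
    norm_num
  have hgN : Filter.Tendsto g Filter.atTop (nhds 0) := by
    have h1 : Filter.Tendsto (fun n : ℕ => ((n:ℝ)+1+a)/((n:ℝ)+1)) Filter.atTop (nhds 1) := by
      have : ∀ n : ℕ, ((n:ℝ)+1+a)/((n:ℝ)+1) = 1 + a * (1/((n:ℝ)+1)) := by
        intro n
        have hn1 : (0:ℝ) < (n:ℝ) + 1 := by positivity
        field_simp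
      simp_rw [this]
      have := tendsto_one_div_add_atTop_nhds_zero_nat (𝕜 := ℝ)
      simpa using (tendsto_const_nhds.add ((this).const_mul a))
    have hcont : ContinuousAt Real.log 1 := Real.continuousAt_log (by norm_num)
    have := hcont.tendsto.comp h1
    simpa [Real.log_one, hg, Function.comp_def] using this
  have : Filter.Tendsto (fun N : ℕ => (g 0 - g N) / Real.log 2) Filter.atTop
      (nhds ((g 0 - 0) / Real.log 2)) :=
    ((tendsto_const_nhds.sub hgN).div_const _)
  simpa [hg0] using this

lemma nu_preimage_Iic {a : ℝ} (h0 : 0 ≤ a) (h1 : a < 1) :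
    gaussMeasure (G ⁻¹' Iic a) = ENNReal.ofReal (Real.log (1 + a) / Real.log 2) := by
  rw [nu_eq_inter (measurable_G measurableSet_Iic), preimage_eq h0 h1,
    measure_iUnion (I_disjoint h0 h1) (fun n => measurableSet_Icc)]
  simp_rw [nu_I h0]
  have ht := telescope (a := a) h0
  have hnn : ∀ n : ℕ, 0 ≤ (Real.log (1 + 1/((n:ℝ)+1)) - Real.log (1 + 1/((n:ℝ)+1+a)))
      / Real.log 2 := by
    intro n
    have hn1 : (0:ℝ) < (n:ℝ) + 1 := by positivity
    have hna : (0:ℝ) < (n:ℝ) + 1 + a := by positivity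
    have : 1/((n:ℝ)+1+a) ≤ 1/((n:ℝ)+1) := one_div_le_one_div_of_le hn1 (by linarith)
    have hlog := Real.log_le_log (show (0:ℝ) < 1 + 1/((n:ℝ)+1+a) by positivity)
      (show (1:ℝ) + 1/((n:ℝ)+1+a) ≤ 1 + 1/((n:ℝ)+1) by linarith)
    exact div_nonneg (by linarith) (Real.log_pos (by norm_num)).le
  rw [← ENNReal.ofReal_tsum_of_nonneg hnn ht.summable, ht.tsum_eq]

lemma map_eq : Measure.map G gaussMeasure = gaussMeasure := by
  have hfin : IsFiniteMeasure (Measure.map G gaussMeasure) := by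
    constructor
    rw [Measure.map_apply measurable_G MeasurableSet.univ, preimage_univ, nu_univ]
    exact ENNReal.one_lt_top
  refine Measure.ext_of_Iic _ _ (fun a => ?_)
  rw [Measure.map_apply measurable_G measurableSet_Iic]
  rcases lt_or_ge a 0 with ha | ha
  · have hpre : G ⁻¹' Iic a = ∅ := by
      ext x
      simp only [mem_preimage, mem_Iic, mem_empty_iff_false, iff_false, not_le]
      exact lt_of_lt_of_le ha (G_nonneg x)
    have hIic : gaussMeasure (Iic a) = 0 := by
      rw [nu_apply measurableSet_Iic]
      have : Iic a ∩ Icc (0:ℝ) 1 = ∅ := by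
        ext x
        simp only [mem_inter_iff, mem_Iic, mem_Icc, mem_empty_iff_false, iff_false]
        rintro ⟨hx, hx0, _⟩
        linarith
      rw [this]
      simp
    rw [hpre, hIic, measure_empty]
  rcases lt_or_ge a 1 with ha1 | ha1
  · rw [nu_preimage_Iic ha ha1, nu_Iic ha ha1.le]
  · have hpre : G ⁻¹' Iic a = univ := by
      ext x
      simp only [mem_preimage, mem_Iic, mem_univ, iff_true]
      exact le_trans (G_lt_one x).le ha1
    have hIic : gaussMeasure (Iic a) = 1 := by
      have hset : Iic a ∩ Icc (0:ℝ) 1 = Icc 0 1 :=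
        inter_eq_right.2 (fun x hx => le_trans hx.2 ha1)
      have h : gaussMeasure (Iic a) = gaussMeasure (Icc (0:ℝ) 1) := by
        rw [nu_apply measurableSet_Iic, hset, nu_apply measurableSet_Icc, inter_self]
      rw [h, nu_total]
    rw [hpre, hIic, nu_univ]

/-- The probability measure with density `1/(log 2 (1+x))` on `[0,1]` is invariant under the
Gauss map. -/
theorem stmt9 :
    gaussMeasure Set.univ = 1 ∧
      ∀ E : Set ℝ, MeasurableSet E → E ⊆ Set.Icc 0 1 →
        gaussMeasure (G ⁻¹' E) = gaussMeasure E := by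
  refine ⟨nu_univ, fun E hE _ => ?_⟩
  rw [← Measure.map_apply measurable_G hE, map_eq]

end
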